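/- Let d ≥ 1 be an integer with gcd(d,p) = 1, let δ ∈ F_q with δ ≠ 0, let α_1, …, α_s ∈ F_q be pairwise distinct, and let (a_1, …, a_s) ∈ F_p^s with (a_1, …, a_s) ≠ (0, …, 0). Then the rational function F(X) = δ · Σ_{i=1}^s a_i (X + α_i)^{−d} ∈ F_q(X) is not of the form H(X)^p − H(X) for any rational function H(X) over the algebraic closure of F_p. -/

import Mathlib

open Polynomial
open scoped Multiplicative
local notation "ℤₘ₀" => WithZero (Multiplicative ℤ)

lemma XaddC_eq {K : Type*} [Field K] (c : K) :
    (Polynomial.X + Polynomial.C c : Polynomial K) = Polynomial.X - Polynomial.C (-c) := by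
  rw [map_neg, sub_neg_eq_add]

lemma XaddC_ne_zero {K : Type*} [Field K] (c : K) :
    (Polynomial.X + Polynomial.C c : Polynomial K) ≠ 0 := by
  rw [XaddC_eq]; exact Polynomial.X_sub_C_ne_zero (-c)

open IsDedekindDomain in
/-- The height-one prime `(X + C c)` of `K[X]`. -/
noncomputable def ptSpec (K : Type*) [Field K] (c : K) :
    HeightOneSpectrum (Polynomial K) where
  asIdeal := Ideal.span {Polynomial.X + Polynomial.C c}
  isPrime := by
    rw [Ideal.span_singleton_prime (XaddC_ne_zero c), XaddC_eq]
    exact (Polynomial.irreducible_X_sub_C (-c)).prime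
  ne_bot := by
    rw [Ne, Ideal.span_singleton_eq_bot]
    exact XaddC_ne_zero c

open IsDedekindDomain in
lemma ptSpec_val_gen {K : Type*} [Field K] (c : K) :
    (ptSpec K c).valuation (RatFunc K) (RatFunc.X + RatFunc.C c)
      = (Multiplicative.ofAdd (-1 : ℤ) : Multiplicative ℤ) := by
  have h : (RatFunc.X + RatFunc.C c : RatFunc K)
      = algebraMap (Polynomial K) (RatFunc K) (Polynomial.X + Polynomial.C c) := by
    rw [map_add, RatFunc.algebraMap_X, RatFunc.algebraMap_C]
  rw [h, HeightOneSpectrum.valuation_of_algebraMap]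
  exact HeightOneSpectrum.intValuation_singleton _ (XaddC_ne_zero c) rfl

open IsDedekindDomain in
lemma ptSpec_val_other {K : Type*} [Field K] {c b : K} (hbc : b ≠ c) :
    (ptSpec K c).valuation (RatFunc K) (RatFunc.X + RatFunc.C b) = 1 := by
  have h : (RatFunc.X + RatFunc.C b : RatFunc K)
      = algebraMap (Polynomial K) (RatFunc K) (Polynomial.X + Polynomial.C b) := by
    rw [map_add, RatFunc.algebraMap_X, RatFunc.algebraMap_C]
  rw [h]
  refine le_antisymm (HeightOneSpectrum.valuation_le_one _ _) ?_
  by_contra hlt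
  rw [not_le] at hlt
  have hdvd := (HeightOneSpectrum.valuation_lt_one_iff_dvd (ptSpec K c)
    (Polynomial.X + Polynomial.C b)).mp hlt
  have : (Polynomial.X + Polynomial.C c : Polynomial K) ∣ (Polynomial.X + Polynomial.C b) := by
    rwa [← span_singleton_dvd_span_singleton_iff_dvd]
  rw [XaddC_eq c, Polynomial.dvd_iff_isRoot] at this
  have h2 := this
  simp only [Polynomial.IsRoot, Polynomial.eval_add, Polynomial.eval_X, Polynomial.eval_C] at h2
  apply hbc
  linear_combination h2

open IsDedekindDomain in
lemma ptSpec_val_C {K : Type*} [Field K] (c : K) {k : K} (hk : k ≠ 0) :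
    (ptSpec K c).valuation (RatFunc K) (RatFunc.C k) = 1 := by
  have h : ∀ m : K, (RatFunc.C m : RatFunc K)
      = algebraMap (Polynomial K) (RatFunc K) (Polynomial.C m) := fun m =>
    (RatFunc.algebraMap_C m).symm
  have h1 : (ptSpec K c).valuation (RatFunc K) (RatFunc.C k) ≤ 1 := by
    rw [h]; exact HeightOneSpectrum.valuation_le_one _ _
  have h2 : (ptSpec K c).valuation (RatFunc K) (RatFunc.C k⁻¹) ≤ 1 := by
    rw [h]; exact HeightOneSpectrum.valuation_le_one _ _
  have hmul : (ptSpec K c).valuation (RatFunc K) (RatFunc.C k) * (ptSpec K c).valuation (RatFunc K) (RatFunc.C k⁻¹)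
      = 1 := by
    rw [← map_mul, ← map_mul, mul_inv_cancel₀ hk, map_one, map_one]
  refine le_antisymm h1 ?_
  calc (1 : ℤₘ₀) = (ptSpec K c).valuation (RatFunc K) (RatFunc.C k) * (ptSpec K c).valuation (RatFunc K) (RatFunc.C k⁻¹) :=
        hmul.symm
    _ ≤ (ptSpec K c).valuation (RatFunc K) (RatFunc.C k) * 1 := mul_le_mul_right h2 _
    _ = (ptSpec K c).valuation (RatFunc K) (RatFunc.C k) := mul_one _

theorem stmt14 {p r : ℕ} [Fact p.Prime] (hr : 0 < r)
    {F : Type*} [Field F] [Fintype F] [Algebra (ZMod p) F]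
    (hF : Fintype.card F = p ^ r)
    (d : ℕ) (hd1 : 1 ≤ d) (hcop : Nat.Coprime d p)
    (δ : F) (hδ : δ ≠ 0) (s : ℕ)
    (α : Fin s → F) (hα : Function.Injective α)
    (a : Fin s → ZMod p) (ha : a ≠ 0) :
    ∀ H : RatFunc (AlgebraicClosure F),
      RatFunc.C (algebraMap F (AlgebraicClosure F) δ) *
        ∑ i, RatFunc.C (algebraMap F (AlgebraicClosure F) (algebraMap (ZMod p) F (a i))) *
          ((RatFunc.X + RatFunc.C (algebraMap F (AlgebraicClosure F) (α i)))⁻¹) ^ d ≠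
        H ^ p - H := by
  intro H hEq
  set K := AlgebraicClosure F with hK
  obtain ⟨i₀, hi₀⟩ : ∃ i, a i ≠ 0 := Function.ne_iff.mp ha
  set c : Fin s → K := fun i => algebraMap F K (α i) with hc
  set a' : Fin s → K := fun i => algebraMap F K (algebraMap (ZMod p) F (a i)) with ha'
  have ha'i₀ : a' i₀ ≠ 0 := by
    intro h
    apply hi₀
    apply (algebraMap (ZMod p) F).injective
    apply (algebraMap F K).injective
    rw [map_zero, map_zero]
    exact h
  have hδ' : algebraMap F K δ ≠ 0 := fun h => hδ ((algebraMap F K).injective (by simpa using h))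
  set v : Valuation (RatFunc K) ℤₘ₀ := (ptSpec K (c i₀)).valuation (RatFunc K)
  -- valuation of the i₀-th term inverse power
  have hvinv : ∀ i : Fin s, v ((RatFunc.X + RatFunc.C (c i))⁻¹)
      = ((ptSpec K (c i₀)).valuation (RatFunc K) (RatFunc.X + RatFunc.C (c i)))⁻¹ := fun i =>
    Valuation.map_inv _ _
  have hvmain : v (((RatFunc.X + RatFunc.C (c i₀))⁻¹) ^ d)
      = ((Multiplicative.ofAdd (d : ℤ) : Multiplicative ℤ) : ℤₘ₀) := by
    rw [map_pow, hvinv, ptSpec_val_gen]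
    rw [← WithZero.coe_inv, ← WithZero.coe_pow, WithZero.coe_inj]
    rw [← ofAdd_neg, neg_neg, ← ofAdd_nsmul]
    simp [mul_comm]
  have hone_lt : (1 : ℤₘ₀) < ((Multiplicative.ofAdd (d : ℤ) : Multiplicative ℤ) : ℤₘ₀) := by
    rw [← WithZero.coe_one, WithZero.coe_lt_coe, ← ofAdd_zero, Multiplicative.ofAdd_lt]
    exact_mod_cast hd1
  -- valuation of the sum
  have hterm_i₀ : v (RatFunc.C (a' i₀) * ((RatFunc.X + RatFunc.C (c i₀))⁻¹) ^ d)
      = ((Multiplicative.ofAdd (d : ℤ) : Multiplicative ℤ) : ℤₘ₀) := by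
    rw [map_mul, ptSpec_val_C _ ha'i₀, one_mul, hvmain]
  have hterm_other : ∀ i ∈ Finset.univ.erase i₀,
      v (RatFunc.C (a' i) * ((RatFunc.X + RatFunc.C (c i))⁻¹) ^ d) ≤ 1 := by
    intro i hi
    have hne : c i ≠ c i₀ := by
      intro h
      exact (Finset.mem_erase.mp hi).1 (hα ((algebraMap F K).injective h))
    rw [map_mul, map_pow, hvinv, ptSpec_val_other hne, inv_one, one_pow, mul_one]
    by_cases h0 : a' i = 0
    · simp [h0]
    · rw [ptSpec_val_C _ h0]
  have hsum : v (∑ i, RatFunc.C (a' i) * ((RatFunc.X + RatFunc.C (c i))⁻¹) ^ d)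
      = ((Multiplicative.ofAdd (d : ℤ) : Multiplicative ℤ) : ℤₘ₀) := by
    rw [← Finset.add_sum_erase Finset.univ _ (Finset.mem_univ i₀)]
    rw [Valuation.map_add_eq_of_lt_left]
    · exact hterm_i₀
    · rw [hterm_i₀]
      exact lt_of_le_of_lt (Valuation.map_sum_le _ hterm_other) hone_lt
  have hLHS : v (RatFunc.C (algebraMap F K δ) *
      ∑ i, RatFunc.C (a' i) * ((RatFunc.X + RatFunc.C (c i))⁻¹) ^ d)
      = ((Multiplicative.ofAdd (d : ℤ) : Multiplicative ℤ) : ℤₘ₀) := by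
    rw [map_mul, ptSpec_val_C _ hδ', one_mul, hsum]
  rw [hEq] at hLHS
  -- now analyze v (H^p - H)
  rcases le_or_gt (v H) 1 with hvH | hvH
  · have : v (H ^ p - H) ≤ 1 := by
      refine Valuation.map_sub _ _ _ |>.trans (max_le ?_ hvH)
      rw [map_pow]
      exact pow_le_one' hvH p
    exact absurd (hLHS ▸ this) (not_le.mpr hone_lt)
  · have hvH0 : v H ≠ 0 := fun h => by simp [h] at hvH
    obtain ⟨x, hx⟩ : ∃ x : Multiplicative ℤ, (x : ℤₘ₀) = v H :=
      WithZero.ne_zero_iff_exists.mp hvH0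
    have hx1 : (1 : Multiplicative ℤ) < x := by
      rwa [← hx, ← WithZero.coe_one, WithZero.coe_lt_coe] at hvH
    have hp2 : 2 ≤ p := (Fact.out : p.Prime).two_le
    have hxlt : v H < v (H ^ p) := by
      rw [map_pow, ← hx, ← WithZero.coe_pow, WithZero.coe_lt_coe]
      have : (0 : ℤ) < Multiplicative.toAdd x := hx1
      calc x = x ^ 1 := (pow_one x).symm
        _ < x ^ p := by
          rw [← Multiplicative.toAdd_lt, toAdd_pow, toAdd_pow, nsmul_eq_mul, nsmul_eq_mul]
          have hp2' : (2 : ℤ) ≤ (p : ℤ) := by exact_mod_cast hp2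
          have hmul := mul_lt_mul_of_pos_right (show (1 : ℤ) < (p : ℤ) by linarith) this
          push_cast
          linarith
    have hvsub : v (H ^ p - H) = v (H ^ p) := Valuation.map_sub_eq_of_lt_left _ hxlt
    rw [hvsub, map_pow, ← hx, ← WithZero.coe_pow, WithZero.coe_inj] at hLHS
    have hdiv : (p : ℤ) ∣ (d : ℤ) := by
      refine ⟨Multiplicative.toAdd x, ?_⟩
      have := congrArg Multiplicative.toAdd hLHS
      rw [toAdd_pow, toAdd_ofAdd, nsmul_eq_mul] at this
      linarith [this]
    have hdvd : p ∣ d := Int.natCast_dvd_natCast.mp hdiv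
    have : p ∣ Nat.gcd d p := Nat.dvd_gcd hdvd dvd_rfl
    rw [hcop] at this
    exact Nat.Prime.one_lt (Fact.out : p.Prime) |>.ne' (Nat.dvd_one.mp this)
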